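/- Let f be a real function differentiable on [ξ₀, ξ*] with f(ξ*) = 0, such that f'(ξ) < 0 for all ξ ∈ [ξ₀, ξ*) and f' is monotonically increasing on [ξ₀, ξ*). Then the Newton–Raphson iteration ξ_{n+1} = ξ_n − f(ξ_n)/f'(ξ_n) started at ξ₀ produces a monotonically increasing sequence that converges to ξ*. -/

import Mathlib

/-- Newton–Raphson with negative, monotonically increasing derivative on `[ξ₀, ξ*)`:
the iteration is monotonically increasing and converges to the root `ξ*`. -/
theorem newton_neg_incr_deriv_converges
    (f f' : ℝ → ℝ) (ξ₀ ξs : ℝ)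
    (hle : ξ₀ ≤ ξs)
    (hderiv : ∀ ξ ∈ Set.Icc ξ₀ ξs, HasDerivAt f (f' ξ) ξ)
    (hroot : f ξs = 0)
    (hneg : ∀ ξ ∈ Set.Ico ξ₀ ξs, f' ξ < 0)
    (hmono : MonotoneOn f' (Set.Ico ξ₀ ξs))
    (x : ℕ → ℝ) (hx0 : x 0 = ξ₀)
    (hxrec : ∀ n, x (n + 1) = x n - f (x n) / f' (x n)) :
    Monotone x ∧ Filter.Tendsto x Filter.atTop (nhds ξs) := by
  have hcont : ContinuousOn f (Set.Icc ξ₀ ξs) := fun a ha =>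
    (hderiv a ha).continuousAt.continuousWithinAt
  -- key: for a < ξs in the interval, f a > 0 and f a ≤ f' a * (a - ξs)
  have key : ∀ a ∈ Set.Icc ξ₀ ξs, a < ξs → 0 < f a ∧ f a ≤ f' a * (a - ξs) := by
    intro a ha hlt
    obtain ⟨c, hc, hceq⟩ := exists_hasDerivAt_eq_slope f f' hlt
      (hcont.mono (Set.Icc_subset_Icc ha.1 le_rfl))
      (fun y hy => hderiv y ⟨le_trans ha.1 hy.1.le, hy.2.le⟩)
    have hcIco : c ∈ Set.Ico ξ₀ ξs := ⟨le_trans ha.1 hc.1.le, hc.2⟩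
    have hfc : f' c < 0 := hneg c hcIco
    have haIco : a ∈ Set.Ico ξ₀ ξs := ⟨ha.1, hlt⟩
    have hmac : f' a ≤ f' c := hmono haIco hcIco hc.1.le
    rw [hroot] at hceq
    have hsub : (0:ℝ) < ξs - a := by linarith
    have h1 : f' c * (ξs - a) = -f a := by
      rw [hceq]; field_simp; ring
    constructor
    · nlinarith
    · nlinarith
  -- Newton step stays in the interval and increases
  have step : ∀ a ∈ Set.Icc ξ₀ ξs,
      a ≤ a - f a / f' a ∧ a - f a / f' a ∈ Set.Icc ξ₀ ξs := by
    intro a ha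
    rcases eq_or_lt_of_le ha.2 with heq | hlt
    · subst heq
      simp [hroot]
      exact hle
    · obtain ⟨hpos, hub⟩ := key a ha hlt
      have hfa' : f' a < 0 := hneg a ⟨ha.1, hlt⟩
      have h2 : a ≤ a - f a / f' a := by
        have : f a / f' a ≤ 0 := div_nonpos_of_nonneg_of_nonpos hpos.le hfa'.le
        linarith
      refine ⟨h2, le_trans ha.1 h2, ?_⟩
      have h3 : a - ξs ≤ f a / f' a := by
        rw [le_div_iff_of_neg hfa']
        nlinarith
      linarith
  have hmem : ∀ n, x n ∈ Set.Icc ξ₀ ξs := by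
    intro n
    induction n with
    | zero => rw [hx0]; exact ⟨le_rfl, hle⟩
    | succ n ih => rw [hxrec]; exact (step _ ih).2
  have hstep : ∀ n, x n ≤ x (n + 1) := fun n => by
    rw [hxrec]; exact (step _ (hmem n)).1
  have hmonox : Monotone x := monotone_nat_of_le_succ hstep
  have hbdd : BddAbove (Set.range x) := ⟨ξs, by rintro y ⟨n, rfl⟩; exact (hmem n).2⟩
  set L := ⨆ n, x n with hLdef
  have htend : Filter.Tendsto x Filter.atTop (nhds L) := tendsto_atTop_ciSup hmonox hbdd
  have hxleL : ∀ n, x n ≤ L := fun n => le_ciSup hbdd n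
  have hLle : L ≤ ξs := ciSup_le fun n => (hmem n).2
  have hL0 : ξ₀ ≤ L := hx0 ▸ hxleL 0
  have hLmem : L ∈ Set.Icc ξ₀ ξs := ⟨hL0, hLle⟩
  refine ⟨hmonox, ?_⟩
  rcases eq_or_lt_of_le hLle with rfl | hLlt
  · exact htend
  · exfalso
    -- every x n < ξs
    have hxIco : ∀ n, x n ∈ Set.Ico ξ₀ ξs := fun n => ⟨(hmem n).1, lt_of_le_of_lt (hxleL n) hLlt⟩
    have hξ₀Ico : ξ₀ ∈ Set.Ico ξ₀ ξs := ⟨le_rfl, lt_of_le_of_lt hL0 hLlt⟩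
    have hfL : Filter.Tendsto (fun n => f (x n)) Filter.atTop (nhds (f L)) :=
      ((hderiv L hLmem).continuousAt.tendsto).comp htend
    have hdiff : Filter.Tendsto (fun n => x (n + 1) - x n) Filter.atTop (nhds 0) := by
      have h1 : Filter.Tendsto (fun n => x (n + 1)) Filter.atTop (nhds L) :=
        htend.comp (Filter.tendsto_add_atTop_nat 1)
      simpa using h1.sub htend
    -- squeeze: 0 ≤ f (x n) ≤ (-f' ξ₀) * (x (n+1) - x n)
    have hfL0 : Filter.Tendsto (fun n => f (x n)) Filter.atTop (nhds 0) := by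
      apply squeeze_zero (fun n => (key _ (hmem n) (hxIco n).2).1.le)
        (g := fun n => (-f' ξ₀) * (x (n + 1) - x n))
      · intro n
        have hfn : f' (x n) < 0 := hneg _ (hxIco n)
        have hmn : f' ξ₀ ≤ f' (x n) := hmono hξ₀Ico (hxIco n) (hmem n).1
        have heq : f (x n) = f' (x n) * (x n - x (n + 1)) := by
          rw [hxrec]; field_simp
          rw [sub_sub_cancel, mul_comm, div_mul_cancel₀ _ hfn.ne]
        have hnn : 0 ≤ x (n + 1) - x n := by linarith [hstep n]
        nlinarith
      · simpa using hdiff.const_mul (-f' ξ₀)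
    have hfLeq : f L = 0 := tendsto_nhds_unique hfL hfL0
    have := (key L hLmem hLlt).1
    linarith
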